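/- arXiv:1403.4174 — 4 statements merged into one kernel-verified Lean document; each statement's English description precedes it below -/
import Mathlib

section
/- Let T = (S, s_init, R, AP, L) be a labeled transition system and B = (Q, q_init, 2^{AP}, δ, F) a Büchi automaton, and let P = T ⊗ B be their product. If p = (s_1,q_1)(s_2,q_2)… is an accepting run of P over a word w ∈ (2^{AP})^ω, witnessed by a sequence w_ε ∈ (2^{AP} ∪ {ε})^ω whose subsequence of non-ε elements is w, then the alternating sequence τ = s_1 ϖ_1 s_2 ϖ_2 … with ϖ_i = w_ε(i) is a valid trace of T, and the word produced by τ equals w. -/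
/-- A labeled transition system `T = (S, s_init, R, AP, L)`. -/
structure TS (S AP : Type*) where
  init : S
  R : S → S → Prop
  L : S → Set AP

/-- A Büchi automaton `B = (Q, q_init, A, δ, F)` over alphabet `A`. -/
structure BA (Q A : Type*) where
  init : Q
  δ : Q → A → Q → Prop
  F : Set Q

/-- `w` is the subsequence of non-silent (non-`none`) elements of `wε`,
where the silent symbol ε is modeled by `none`. -/
def IsNonSilentSubseq {A : Type*} (wε : ℕ → Option A) (w : ℕ → A) : Prop :=
  ∃ φ : ℕ → ℕ, StrictMono φ ∧ (∀ k, wε (φ k) = some (w k)) ∧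
    ∀ i, i ∉ Set.range φ → wε i = none

/-- `τ = s_1 ϖ_1 s_2 ϖ_2 …` (given by its state sequence `τs` and service
sequence `τw`, where `none` denotes the silent service ε) is a trace of `T`. -/
def TS.IsTrace {S AP : Type*} (T : TS S AP) (τs : ℕ → S) (τw : ℕ → Option (Set AP)) : Prop :=
  τs 0 = T.init ∧
  ∀ i, (τs i = τs (i + 1) ∧ ∃ ς, τw i = some ς ∧ ς ⊆ T.L (τs i)) ∨
       (T.R (τs i) (τs (i + 1)) ∧ τw i = none)

/-- The transition relation of the product automaton `P = T ⊗ B`. -/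
def ProdTrans {S Q AP : Type*} (T : TS S AP) (B : BA Q (Set AP)) :
    S × Q → Option (Set AP) → S × Q → Prop := fun p σ p' =>
  (T.R p.1 p'.1 ∧ σ = none ∧ p.2 = p'.2) ∨
  (p.1 = p'.1 ∧ ∃ ς, σ = some ς ∧ ς ⊆ T.L p.1 ∧ B.δ p.2 ς p'.2)

/-- If `p = (s_1,q_1)(s_2,q_2)…` is an accepting run of the product
`P = T ⊗ B` over a word `w ∈ (2^{AP})^ω`, witnessed by a sequence `wε` whose
subsequence of non-ε elements is `w`, then the alternating sequence
`τ = s_1 ϖ_1 s_2 ϖ_2 …` with `ϖ_i = wε(i)` is a valid trace of `T`, and the word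
produced by `τ` equals `w`. -/
theorem product_run_projects_to_valid_trace
    {S Q AP : Type*} (T : TS S AP) (B : BA Q (Set AP))
    (w : ℕ → Set AP) (p : ℕ → S × Q) (wε : ℕ → Option (Set AP))
    (hinit : p 0 = (T.init, B.init))
    (hwit : IsNonSilentSubseq wε w)
    (hstep : ∀ i, ProdTrans T B (p i) (wε i) (p (i + 1)))
    (hacc : ∀ N, ∃ i ≥ N, (p i).2 ∈ B.F) :
    T.IsTrace (fun i => (p i).1) wε ∧
    {i | wε i ≠ none}.Infinite ∧
    IsNonSilentSubseq wε w := by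
  obtain ⟨φ, hφ, hsome, hnone⟩ := hwit
  refine ⟨⟨by simp [hinit], fun i => ?_⟩, ?_, ⟨φ, hφ, hsome, hnone⟩⟩
  · rcases hstep i with ⟨hR, hn, -⟩ | ⟨he, ς, hς, hsub, -⟩
    · exact Or.inr ⟨hR, hn⟩
    · exact Or.inl ⟨he, ς, hς, hsub⟩
  · have : Set.range φ ⊆ {i | wε i ≠ none} := by
      rintro _ ⟨k, rfl⟩
      simp [hsome k]
    exact Set.Infinite.mono this (Set.infinite_range_of_injective hφ.injective)
end

section
/- Let T = (S, s_init, R, AP, L) be a labeled transition system, B = (Q, q_init, 2^{AP}, δ, F) a Büchi automaton, and P = T ⊗ B their product. If p = (s_1,q_1)(s_2,q_2)… is an accepting run of P over a word w ∈ (2^{AP})^ω, witnessed by w_ε whose subsequence of non-ε elements is w, then the sequence obtained from q_1 q_2 q_3 … by deleting, for each i with w_ε(i) = ε, the entry q_{i+1} (note q_i = q_{i+1} in that case) is an accepting run of B over w; in particular w ∈ L(B). -/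
/-- `ρ` is a run of the Büchi automaton `B` over the infinite word `w`. -/
def BA.IsRun {Q A : Type*} (B : BA Q A) (w : ℕ → A) (ρ : ℕ → Q) : Prop :=
  ρ 0 = B.init ∧ ∀ i, B.δ (ρ i) (w i) (ρ (i + 1))

/-- `ρ` visits the accepting set `F` infinitely often. -/
def BA.IsAccepting {Q A : Type*} (B : BA Q A) (ρ : ℕ → Q) : Prop :=
  ∀ N, ∃ i ≥ N, ρ i ∈ B.F

/-- `w ∈ L(B)`: some accepting run of `B` over `w` exists. -/
def BA.Lang {Q A : Type*} (B : BA Q A) (w : ℕ → A) : Prop :=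
  ∃ ρ, B.IsRun w ρ ∧ B.IsAccepting ρ

/-- If `p = (s_1,q_1)(s_2,q_2)…` is an accepting run of the product
`P = T ⊗ B` over `w`, witnessed by `wε` whose subsequence of non-ε elements is `w`
(via the index map `φ`), then the sequence obtained from `q_1 q_2 q_3 …` by deleting,
for each `i` with `wε(i) = ε`, the entry `q_{i+1}` (the remaining entries are `q_1`
followed by the entries `q_{φ(k)+1}`) is an accepting run of `B` over `w`;
in particular `w ∈ L(B)`. -/
theorem product_run_projects_to_accepting_buchi_run
    {S Q AP : Type*} (T : TS S AP) (B : BA Q (Set AP))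
    (w : ℕ → Set AP) (p : ℕ → S × Q) (wε : ℕ → Option (Set AP)) (φ : ℕ → ℕ)
    (hinit : p 0 = (T.init, B.init))
    (hφ : StrictMono φ)
    (hφw : ∀ k, wε (φ k) = some (w k))
    (hφn : ∀ i, i ∉ Set.range φ → wε i = none)
    (hstep : ∀ i, ProdTrans T B (p i) (wε i) (p (i + 1)))
    (hacc : ∀ N, ∃ i ≥ N, (p i).2 ∈ B.F) :
    B.IsRun w (fun k => match k with | 0 => (p 0).2 | (k + 1) => (p (φ k + 1)).2) ∧
    B.IsAccepting (fun k => match k with | 0 => (p 0).2 | (k + 1) => (p (φ k + 1)).2) ∧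
    B.Lang w := by
  -- silent steps preserve the second component
  have hq : ∀ i, wε i = none → (p (i + 1)).2 = (p i).2 := by
    intro i h
    rcases hstep i with ⟨_, _, h2⟩ | ⟨_, ς, hς, _⟩
    · exact h2.symm
    · rw [h] at hς; exact absurd hς (by simp)
  have hnone : ∀ j, (∀ m, φ m ≠ j) → wε j = none := by
    intro j h
    exact hφn j (by simpa [Set.mem_range] using h)
  have hconst : ∀ a b, a ≤ b → (∀ j, a ≤ j → j < b → wε j = none) →
      (p b).2 = (p a).2 := by
    intro a b hab
    induction b, hab using Nat.le_induction with
    | base => intro _; rfl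
    | succ n hn ih =>
      intro h
      rw [hq n (h n hn (Nat.lt_succ_self n))]
      exact ih (fun j hja hjn => h j hja (Nat.lt_succ_of_lt hjn))
  have h0 : (p (φ 0)).2 = (p 0).2 := by
    refine hconst 0 (φ 0) (Nat.zero_le _) (fun j _ hj => hnone j ?_)
    intro m hm
    exact absurd (hm ▸ hφ.monotone (Nat.zero_le m)) (Nat.not_le.2 hj)
  have hseg : ∀ k, (p (φ (k + 1))).2 = (p (φ k + 1)).2 := by
    intro k
    refine hconst (φ k + 1) (φ (k + 1)) (hφ (Nat.lt_succ_self k)) (fun j hja hjb => hnone j ?_)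
    intro m hm
    have hkm : k < m := hφ.lt_iff_lt.1 (by omega)
    have : φ (k + 1) ≤ φ m := hφ.monotone hkm
    omega
  set ρ : ℕ → Q := fun k => match k with | 0 => (p 0).2 | (k + 1) => (p (φ k + 1)).2 with hρ
  have hρφ : ∀ k, (p (φ k)).2 = ρ k := by
    intro k
    cases k with
    | zero => exact h0
    | succ k => exact hseg k
  have hrun : B.IsRun w ρ := by
    constructor
    · simp [hρ, hinit]
    · intro i
      rcases hstep (φ i) with ⟨_, h2, _⟩ | ⟨_, ς, hς, _, hδ⟩
      · rw [hφw i] at h2; exact absurd h2 (by simp)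
      · rw [hφw i] at hς
        obtain rfl : w i = ς := by injection hς
        have : ρ (i + 1) = (p (φ i + 1)).2 := rfl
        rw [this, ← hρφ i]
        exact hδ
  have haccρ : B.IsAccepting ρ := by
    intro N
    obtain ⟨i, hi, hF⟩ := hacc (φ N + 1)
    have hex : ∃ k, i ≤ φ (k + 1) := ⟨i, Nat.le_trans (Nat.le_succ i) (hφ.le_apply)⟩
    classical
    have hk0 : i ≤ φ (Nat.find hex + 1) := Nat.find_spec hex
    have hklt0 : φ (Nat.find hex) < i := by
      rcases Nat.eq_zero_or_pos (Nat.find hex) with h | h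
      · rw [h]
        have : φ 0 ≤ φ N := hφ.monotone (Nat.zero_le N)
        omega
      · have hm := Nat.find_min hex (show Nat.find hex - 1 < Nat.find hex by omega)
        rw [Nat.sub_add_cancel h] at hm
        omega
    obtain ⟨k, hk, hklt⟩ : ∃ k, i ≤ φ (k + 1) ∧ φ k < i :=
      ⟨Nat.find hex, hk0, hklt0⟩
    have hNk : N ≤ k + 1 := by
      have : φ N < φ (k + 1) := by omega
      exact Nat.le_of_lt (hφ.lt_iff_lt.1 this)
    have hqi : (p i).2 = ρ (k + 1) := by
      have : (p i).2 = (p (φ k + 1)).2 := by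
        refine hconst (φ k + 1) i hklt (fun j hja hjb => hnone j ?_)
        intro m hm
        have hkm : k < m := hφ.lt_iff_lt.1 (by omega)
        have : φ (k + 1) ≤ φ m := hφ.monotone hkm
        omega
      exact this
    exact ⟨k + 1, hNk, hqi ▸ hF⟩
  exact ⟨hrun, haccρ, ρ, hrun, haccρ⟩
end

section
/- Let T = (S, s_init, R, AP, L) be a labeled transition system, B = (Q, q_init, 2^{AP}, δ, F) a Büchi automaton, and P = T ⊗ B their product. For every word w ∈ L(B) such that w is the word produced by some valid trace τ of T, there exists an accepting run of P over w. -/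
/-- For every word `w ∈ L(B)` such that `w` is the word produced
by some valid trace `τ` of `T`, there exists an accepting run of the product
`P = T ⊗ B` over `w` (i.e., a sequence starting at the initial product state,
respecting the product transitions along some witness `wε` whose subsequence of
non-ε elements is `w`, and visiting `S × F` infinitely often). -/
theorem product_has_accepting_run_over_produced_word
    {S Q AP : Type*} (T : TS S AP) (B : BA Q (Set AP))
    (w : ℕ → Set AP)
    (hw : B.Lang w)
    (τs : ℕ → S) (τw : ℕ → Option (Set AP))
    (hτ : T.IsTrace τs τw)
    (hprod : IsNonSilentSubseq τw w) :
    ∃ (p : ℕ → S × Q) (wε : ℕ → Option (Set AP)),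
      p 0 = (T.init, B.init) ∧
      IsNonSilentSubseq wε w ∧
      (∀ i, ProdTrans T B (p i) (wε i) (p (i + 1))) ∧
      (∀ N, ∃ i ≥ N, (p i).2 ∈ B.F) := by
  obtain ⟨ρ, ⟨hρ0, hρstep⟩, hρacc⟩ := hw
  obtain ⟨φ, hφmono, hφsome, hφnone⟩ := hprod
  set c : ℕ → ℕ := fun i => ((Finset.range i).filter (fun j => (τw j).isSome)).card with hc
  have hcφ : ∀ k, c (φ k) = k := by
    intro k
    have : (Finset.range (φ k)).filter (fun j => (τw j).isSome)
        = (Finset.range k).image φ := by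
      ext j
      simp only [Finset.mem_filter, Finset.mem_range, Finset.mem_image]
      constructor
      · rintro ⟨hjlt, hjsome⟩
        have hj : j ∈ Set.range φ := by
          by_contra h
          rw [hφnone j h] at hjsome
          simp at hjsome
        obtain ⟨m, rfl⟩ := hj
        exact ⟨m, hφmono.lt_iff_lt.mp hjlt, rfl⟩
      · rintro ⟨m, hm, rfl⟩
        exact ⟨hφmono hm, by rw [hφsome m]; rfl⟩
    simp [hc, this, Finset.card_image_of_injective _ hφmono.injective]
  have hcsucc : ∀ i, c (i + 1) = if (τw i).isSome then c i + 1 else c i := by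
    intro i
    simp only [hc, Finset.range_add_one, Finset.filter_insert]
    split <;> simp [Finset.card_insert_of_notMem]
  refine ⟨fun i => (τs i, ρ (c i)), τw, ?_, ⟨φ, hφmono, hφsome, hφnone⟩, ?_, ?_⟩
  · simp [hτ.1, hc, hρ0]
  · intro i
    rcases h : τw i with _ | ς
    · rcases hτ.2 i with ⟨_, ς, hς, _⟩ | ⟨hR, _⟩
      · rw [h] at hς; exact absurd hς (by simp)
      · left
        refine ⟨hR, rfl, ?_⟩
        simp [hcsucc i, h]
    · rcases hτ.2 i with ⟨heq, ς', hς', hsub⟩ | ⟨_, hnone⟩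
      · right
        rw [h] at hς'
        obtain ⟨k, rfl⟩ : i ∈ Set.range φ := by
          by_contra hni
          rw [hφnone i hni] at h; simp at h
        have hwk : ς = w k := by
          have := hφsome k; rw [h] at this; exact (Option.some.inj this)
        refine ⟨heq, ς, rfl, ?_, ?_⟩
        · injection hς' with hh; subst hh; exact hsub
        · have h1 : c (φ k + 1) = k + 1 := by
            rw [hcsucc, hcφ]; simp [h]
          simp only [h1, hcφ, hwk]
          exact hρstep k
      · rw [h] at hnone; simp at hnone
  · intro N
    obtain ⟨k, hkN, hkF⟩ := hρacc N
    exact ⟨φ k, le_trans hkN (le_trans (Nat.le_of_lt_succ (Nat.lt_succ_of_le hφmono.le_apply)) le_rfl), by simpa [hcφ k] using hkF⟩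
end

section
/- Let T = (S, s_init, R, AP, L) be a labeled transition system, B = (Q, q_init, 2^{AP}, δ, F) a Büchi automaton, and P = T ⊗ B their product. Suppose there exist in P a finite path from the initial state (s_init, q_init) to some state q_f ∈ F_P = S × F, and a finite cycle from q_f back to q_f whose sequence of transition labels contains at least one non-ε label. Then there exists a valid trace τ of T whose produced word w(τ) belongs to L(B) (obtained by following the path and then repeating the cycle forever). -/
/-- Suppose the product `P = T ⊗ B` contains a finite path from the
initial state `(s_init, q_init)` to some state `q_f ∈ F_P = S × F`, and a finite
cycle from `q_f` back to `q_f` whose sequence of transition labels contains at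
least one non-ε label. Then there exists a valid trace `τ` of `T` whose produced
word `w(τ)` belongs to `L(B)`. -/
theorem lasso_in_product_gives_valid_satisfying_trace
    {S Q AP : Type*} (T : TS S AP) (B : BA Q (Set AP))
    (m : ℕ) (ps : ℕ → S × Q) (σs : ℕ → Option (Set AP))
    (hinit : ps 0 = (T.init, B.init))
    (hpath : ∀ i < m, ProdTrans T B (ps i) (σs i) (ps (i + 1)))
    (hF : (ps m).2 ∈ B.F)
    (l : ℕ) (hl : 1 ≤ l) (cs : ℕ → S × Q) (cσ : ℕ → Option (Set AP))
    (hc0 : cs 0 = ps m) (hcl : cs l = ps m)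
    (hcyc : ∀ i < l, ProdTrans T B (cs i) (cσ i) (cs (i + 1)))
    (hns : ∃ i < l, cσ i ≠ none) :
    ∃ (τs : ℕ → S) (τw : ℕ → Option (Set AP)) (w : ℕ → Set AP),
      T.IsTrace τs τw ∧ IsNonSilentSubseq τw w ∧ B.Lang w := by
  classical
  -- the infinite lasso sequences
  set p : ℕ → S × Q := fun i => if i < m then ps i else cs ((i - m) % l) with hp_def
  set σ : ℕ → Option (Set AP) := fun i => if i < m then σs i else cσ ((i - m) % l) with hσ_def
  have hlpos : 0 < l := hl
  have hp0 : p 0 = (T.init, B.init) := by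
    by_cases h : 0 < m
    · simp only [hp_def, if_pos h, hinit]
    · have hm0 : m = 0 := by omega
      simp only [hp_def, hm0, Nat.lt_irrefl, if_false, Nat.sub_zero, Nat.zero_mod, hc0, hm0,
        hinit]
  have hpm : ∀ j, p (m + j * l) = ps m := by
    intro j
    have : ¬ (m + j * l < m) := by omega
    simp only [hp_def, if_neg this, Nat.add_sub_cancel_left, Nat.mul_mod_left, hc0]
  -- each step is a product transition
  have htrans : ∀ i, ProdTrans T B (p i) (σ i) (p (i + 1)) := by
    intro i
    by_cases hi : i < m
    · have hpi : p i = ps i := by simp [hp_def, hi]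
      have hσi : σ i = σs i := by simp [hσ_def, hi]
      have hpi1 : p (i + 1) = ps (i + 1) := by
        by_cases hi1 : i + 1 < m
        · simp [hp_def, hi1]
        · have hieq : i + 1 = m := by omega
          rw [hieq]; simp [hp_def, hc0]
      rw [hpi, hσi, hpi1]; exact hpath i hi
    · have hge : m ≤ i := by omega
      set r := (i - m) % l with hr_def
      have hrl : r < l := Nat.mod_lt _ hlpos
      have hpi : p i = cs r := by simp [hp_def, hi, hr_def]
      have hσi : σ i = cσ r := by simp [hσ_def, hi, hr_def]
      have hmod : (i + 1 - m) % l = (r + 1) % l := by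
        have h' : i + 1 - m = (i - m) + 1 := by omega
        rw [h', hr_def, Nat.mod_add_mod]
      have hpi1 : p (i + 1) = cs ((r + 1) % l) := by
        have : ¬ (i + 1 < m) := by omega
        simp [hp_def, this, hmod]
      rw [hpi, hσi, hpi1]
      by_cases hrl1 : r + 1 < l
      · rw [Nat.mod_eq_of_lt hrl1]; exact hcyc r hrl
      · have he : r + 1 = l := by omega
        rw [he, Nat.mod_self, hc0, ← hcl, ← he]
        exact hcyc r hrl
  -- silent steps preserve the Q-component
  have hQconst : ∀ i, σ i = none → (p i).2 = (p (i + 1)).2 := by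
    intro i hsil
    rcases htrans i with ⟨_, _, h⟩ | ⟨_, ς, hσς, _⟩
    · exact h
    · rw [hsil] at hσς; exact absurd hσς (by simp)
  have hchain : ∀ a b, a ≤ b → (∀ j, a ≤ j → j < b → σ j = none) → (p a).2 = (p b).2 := by
    intro a b hab
    induction b, hab using Nat.le_induction with
    | base => intro _; rfl
    | succ b hab ih =>
      intro hsil
      rw [ih (fun j hj1 hj2 => hsil j hj1 (by omega))]
      exact hQconst b (hsil b hab (by omega))
  -- the set of non-silent positions is infinite
  set ns : ℕ → Prop := fun i => σ i ≠ none with hns_def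
  obtain ⟨i0, hi0l, hi0⟩ := hns
  have hns_at : ∀ j, ns (m + j * l + i0) := by
    intro j
    have h1 : ¬ (m + j * l + i0 < m) := by omega
    have h2 : (m + j * l + i0 - m) % l = i0 := by
      have : m + j * l + i0 - m = j * l + i0 := by omega
      rw [this, Nat.add_comm, Nat.add_mul_mod_self_right]
      exact Nat.mod_eq_of_lt hi0l
    simp only [hns_def, hσ_def, if_neg h1, h2]
    exact hi0
  have hns_inf : (setOf ns).Infinite := by
    refine Set.infinite_of_injective_forall_mem (f := fun j : ℕ => m + j * l + i0) ?_ hns_at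
    intro a b hab
    simp only at hab
    have : a * l = b * l := by omega
    exact Nat.eq_of_mul_eq_mul_right hlpos this
  set φ : ℕ → ℕ := Nat.nth ns with hφ_def
  have hφmono : StrictMono φ := Nat.nth_strictMono hns_inf
  have hφns : ∀ k, ns (φ k) := fun k => Nat.nth_mem_of_infinite hns_inf k
  set w : ℕ → Set AP := fun k => (σ (φ k)).getD ∅ with hw_def
  have hw : ∀ k, σ (φ k) = some (w k) := by
    intro k
    have := hφns k
    rcases Option.ne_none_iff_exists'.1 this with ⟨ς, hς⟩
    rw [hw_def]; simp only [hς, Option.getD_some]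
  have hrange : ∀ i, ns i → i ∈ Set.range φ := fun i hi => ⟨Nat.count ns i, Nat.nth_count hi⟩
  -- positions strictly between consecutive φ's (or before φ 0) are silent
  have hsil_mid : ∀ i, (∀ k, i ≠ φ k) → σ i = none := by
    intro i hk
    by_contra hcon
    obtain ⟨k, hk'⟩ := hrange i hcon
    exact hk k hk'.symm
  -- for any i, the Q-component at i equals the Q-component at φ (count ns i)
  have hkey : ∀ i, (p i).2 = (p (φ (Nat.count ns i))).2 := by
    intro i
    apply hchain
    · exact Nat.le_nth_count hns_inf i
    · intro j hj1 hj2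
      by_contra hcon
      have hjns : ns j := hcon
      have h1 : φ (Nat.count ns j) = j := Nat.nth_count hjns
      have h2 : Nat.count ns i ≤ Nat.count ns j := Nat.count_monotone ns hj1
      have h3 : φ (Nat.count ns i) ≤ φ (Nat.count ns j) := hφmono.monotone h2
      omega
  set ρ : ℕ → Q := fun k => (p (φ k)).2 with hρ_def
  refine ⟨fun i => (p i).1, σ, w, ?_, ?_, ρ, ?_, ?_⟩
  · -- IsTrace
    constructor
    · show (p 0).1 = T.init
      rw [hp0]
    · intro i
      rcases htrans i with ⟨hR, hσn, _⟩ | ⟨h1, ς, hσς, hςL, _⟩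
      · exact Or.inr ⟨hR, hσn⟩
      · exact Or.inl ⟨h1, ς, hσς, hςL⟩
  · -- IsNonSilentSubseq
    refine ⟨φ, hφmono, hw, ?_⟩
    intro i hi
    by_contra hcon
    exact hi (hrange i hcon)
  · -- IsRun
    constructor
    · have h0 : (p 0).2 = (p (φ 0)).2 := by
        apply hchain 0 (φ 0) (Nat.zero_le _)
        intro j _ hj2
        apply hsil_mid
        intro k hk
        have : φ 0 ≤ φ k := hφmono.monotone (Nat.zero_le k)
        omega
      show (p (φ 0)).2 = B.init
      rw [← h0, hp0]
    · intro k
      rcases htrans (φ k) with ⟨_, hσn, _⟩ | ⟨_, ς, hσς, _, hδ⟩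
      · rw [hw k] at hσn; exact absurd hσn (by simp)
      · rw [hw k] at hσς
        have hςw : ς = w k := (Option.some.inj hσς).symm
        rw [hςw] at hδ
        have hnext : (p (φ k + 1)).2 = (p (φ (k + 1))).2 := by
          apply hchain
          · exact hφmono (by omega)
          · intro j hj1 hj2
            apply hsil_mid
            intro k' hk'
            rcases lt_trichotomy k' (k + 1) with h | h | h
            · have : φ k' ≤ φ k := hφmono.monotone (by omega)
              omega
            · subst h; omega
            · have : φ (k + 1) ≤ φ k' := hφmono.monotone (by omega)
              omega
        show B.δ (p (φ k)).2 (w k) (p (φ (k + 1))).2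
        rw [← hnext]
        exact hδ
  · -- IsAccepting
    have hcount_ge : ∀ j, j ≤ Nat.count ns (m + j * l) := by
      intro j
      induction j with
      | zero => exact Nat.zero_le _
      | succ j ih =>
        have h1 : Nat.count ns (m + j * l + i0 + 1) = Nat.count ns (m + j * l + i0) + 1 := by
          rw [Nat.count_succ, if_pos (hns_at j)]
        have h2 : Nat.count ns (m + j * l) ≤ Nat.count ns (m + j * l + i0) :=
          Nat.count_monotone ns (by omega)
        have h3 : m + j * l + i0 + 1 ≤ m + (j + 1) * l := by
          have : (j + 1) * l = j * l + l := by ring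
          omega
        have h4 : Nat.count ns (m + j * l + i0 + 1) ≤ Nat.count ns (m + (j + 1) * l) :=
          Nat.count_monotone ns h3
        omega
    intro N
    refine ⟨Nat.count ns (m + N * l), hcount_ge N, ?_⟩
    show (p (φ (Nat.count ns (m + N * l)))).2 ∈ B.F
    rw [← hkey (m + N * l), hpm N]
    exact hF
end
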